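/- Let κ > 1 and 0 ≤ λ ≤ μ < 1 satisfy (κ−1)(μ−λ)/(1−λ) − κ·ln(1−λ) ≤ 1 and (κ−1)(1−μ)·ln((1−λ)/(1−μ)) − (κ−1)μ + κλ ≥ 0. Define g : [0,1] → ℝ by g(y) = κ/(1−y) for y ∈ [0, λ), g(y) = (κ−1)(1−μ)/(1−y)² for y ∈ [λ, μ), and g(y) = 0 for y ∈ [μ, 1]. Then g is ((κ−1)μ, κ−1)-bounded, i.e.: (i) ∫_0^1 g(y) dy ≤ 1; (ii) for all z ∈ [0,1], (1 − z) ∫_z^1 g(y) dy ≥ (κ−1)μ − (κ−1)z; and (iii) for all z ∈ [0,1], ∫_z^1 (1 − y) g(y) dy ≥ (κ−1)μ − κz. -/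

import Mathlib

open MeasureTheory


lemma aux_ae_ne (c : ℝ) : ∀ᵐ y : ℝ, y ≠ c := by
  rw [MeasureTheory.ae_iff]
  exact measure_mono_null (fun y hy => by simpa using hy) Real.volume_singleton

lemma aux_log (a z : ℝ) (ha : a < 1) (hz : z < 1) :
    (a - z) / (1 - z) ≤ Real.log (1 - z) - Real.log (1 - a) := by
  have h1 : 0 < 1 - z := by linarith
  have h2 : 0 < 1 - a := by linarith
  have h := Real.log_le_sub_one_of_pos (div_pos h2 h1)
  rw [Real.log_div (ne_of_gt h2) (ne_of_gt h1)] at h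
  have e : (1 - a) / (1 - z) - 1 = -((a - z) / (1 - z)) := by field_simp; ring
  linarith

lemma aux_ii_inv (c a b : ℝ) (hab : a ≤ b) (hb : b < 1) :
    IntervalIntegrable (fun y => c / (1 - y)) volume a b := by
  apply ContinuousOn.intervalIntegrable
  apply ContinuousOn.div continuousOn_const (by fun_prop)
  intro y hy
  rw [Set.uIcc_of_le hab] at hy
  exact ne_of_gt (by linarith [hy.2] : (0:ℝ) < 1 - y)

lemma aux_ii_invsq (c a b : ℝ) (hab : a ≤ b) (hb : b < 1) :
    IntervalIntegrable (fun y => c / (1 - y) ^ 2) volume a b := by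
  apply ContinuousOn.intervalIntegrable
  apply ContinuousOn.div continuousOn_const (by fun_prop)
  intro y hy
  rw [Set.uIcc_of_le hab] at hy
  have : (0:ℝ) < 1 - y := by linarith [hy.2]
  positivity

lemma aux_int_inv (c a b : ℝ) (hab : a ≤ b) (hb : b < 1) :
    ∫ y in a..b, c / (1 - y) = c * (Real.log (1 - a) - Real.log (1 - b)) := by
  have key : ∀ y ∈ Set.uIcc a b,
      HasDerivAt (fun t => -(c * Real.log (1 - t))) (c / (1 - y)) y := by
    intro y hy
    rw [Set.uIcc_of_le hab] at hy
    have hy1 : 0 < 1 - y := by linarith [hy.2]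
    have h1 : HasDerivAt (fun t : ℝ => 1 - t) (-1) y := (hasDerivAt_id y).const_sub 1
    have h2 : HasDerivAt (fun t => Real.log (1 - t)) ((1 - y)⁻¹ * (-1)) y :=
      (Real.hasDerivAt_log (ne_of_gt hy1)).comp y h1
    have h3 := (h2.const_mul c).neg
    convert h3 using 1 <;> first | rfl | field_simp
  rw [intervalIntegral.integral_eq_sub_of_hasDerivAt key (aux_ii_inv c a b hab hb)]
  ring

lemma aux_int_invsq (c a b : ℝ) (hab : a ≤ b) (hb : b < 1) :
    ∫ y in a..b, c / (1 - y) ^ 2 = c * (1 / (1 - b) - 1 / (1 - a)) := by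
  have key : ∀ y ∈ Set.uIcc a b,
      HasDerivAt (fun t => c * (1 - t)⁻¹) (c / (1 - y) ^ 2) y := by
    intro y hy
    rw [Set.uIcc_of_le hab] at hy
    have hy1 : 0 < 1 - y := by linarith [hy.2]
    have h1 : HasDerivAt (fun t : ℝ => 1 - t) (-1) y := (hasDerivAt_id y).const_sub 1
    have h2 := (h1.inv (ne_of_gt hy1)).const_mul c
    convert h2 using 1 <;> first | rfl | field_simp
  rw [intervalIntegral.integral_eq_sub_of_hasDerivAt key (aux_ii_invsq c a b hab hb)]
  ring


lemma aux_intInt_congr {f g : ℝ → ℝ} {a b : ℝ} (hf : IntervalIntegrable f volume a b)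
    (h : ∀ᵐ y, y ∈ Set.uIoc a b → g y = f y) : IntervalIntegrable g volume a b :=
  hf.congr_ae ((ae_restrict_iff' measurableSet_uIoc).2
    (h.mono fun y hy hmem => (hy hmem).symm))


/-- Let κ > 1 and 0 ≤ λ ≤ μ < 1 satisfy
(κ−1)(μ−λ)/(1−λ) − κ·ln(1−λ) ≤ 1 and
(κ−1)(1−μ)·ln((1−λ)/(1−μ)) − (κ−1)μ + κλ ≥ 0.
Define g(y) = κ/(1−y) on [0, λ), g(y) = (κ−1)(1−μ)/(1−y)² on [λ, μ), and
g(y) = 0 on [μ, 1]. Then g is ((κ−1)μ, κ−1)-bounded: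
(i) ∫₀¹ g ≤ 1; (ii) (1 − z)∫_z¹ g ≥ (κ−1)μ − (κ−1)z for all z ∈ [0,1];
(iii) ∫_z¹ (1 − y) g(y) dy ≥ (κ−1)μ − κz for all z ∈ [0,1]. -/
theorem gsp_beta_delta_bounded_function (κ lam mu : ℝ)
    (hκ : 1 < κ) (hl0 : 0 ≤ lam) (hlm : lam ≤ mu) (hm1 : mu < 1)
    (hc1 : (κ - 1) * (mu - lam) / (1 - lam) - κ * Real.log (1 - lam) ≤ 1)
    (hc2 : 0 ≤ (κ - 1) * (1 - mu) * Real.log ((1 - lam) / (1 - mu))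
            - (κ - 1) * mu + κ * lam)
    (g : ℝ → ℝ)
    (hg₁ : ∀ y : ℝ, 0 ≤ y → y < lam → g y = κ / (1 - y))
    (hg₂ : ∀ y : ℝ, lam ≤ y → y < mu → g y = (κ - 1) * (1 - mu) / (1 - y) ^ 2)
    (hg₃ : ∀ y : ℝ, mu ≤ y → y ≤ 1 → g y = 0) :
    (∫ y in (0:ℝ)..1, g y) ≤ 1 ∧
    (∀ z : ℝ, 0 ≤ z → z ≤ 1 →
      (κ - 1) * mu - (κ - 1) * z ≤ (1 - z) * ∫ y in z..(1:ℝ), g y) ∧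
    (∀ z : ℝ, 0 ≤ z → z ≤ 1 →
      (κ - 1) * mu - κ * z ≤ ∫ y in z..(1:ℝ), (1 - y) * g y) := by
  have hl1 : lam < 1 := lt_of_le_of_lt hlm hm1
  have h1l : (0:ℝ) < 1 - lam := by linarith
  have h1m : (0:ℝ) < 1 - mu := by linarith
  have hm0 : (0:ℝ) ≤ mu := le_trans hl0 hlm
  have hκ0 : (0:ℝ) < κ := by linarith
  have hκ1 : (0:ℝ) < κ - 1 := by linarith
  -- a.e. descriptions of g on the pieces
  have ae1 : ∀ z : ℝ, 0 ≤ z → z ≤ lam →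
      (∀ᵐ y, y ∈ Set.uIoc z lam → g y = κ / (1 - y)) := by
    intro z hz hzl
    filter_upwards [aux_ae_ne lam] with y hy hmem
    rw [Set.uIoc_of_le hzl] at hmem
    exact hg₁ y (le_trans hz hmem.1.le) (lt_of_le_of_ne hmem.2 hy)
  have ae2 : ∀ z : ℝ, lam ≤ z → z ≤ mu →
      (∀ᵐ y, y ∈ Set.uIoc z mu → g y = (κ - 1) * (1 - mu) / (1 - y) ^ 2) := by
    intro z hz hzm
    filter_upwards [aux_ae_ne mu] with y hy hmem
    rw [Set.uIoc_of_le hzm] at hmem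
    exact hg₂ y (le_trans hz hmem.1.le) (lt_of_le_of_ne hmem.2 hy)
  have ae1' : ∀ z : ℝ, 0 ≤ z → z ≤ lam →
      (∀ᵐ y, y ∈ Set.uIoc z lam → (1 - y) * g y = κ) := by
    intro z hz hzl
    filter_upwards [ae1 z hz hzl] with y hy hmem
    have hmem' := hmem
    rw [Set.uIoc_of_le hzl] at hmem'
    have h1y : (1:ℝ) - y ≠ 0 := ne_of_gt (by linarith [hmem'.2, hl1])
    rw [hy hmem]; field_simp
  have ae2' : ∀ z : ℝ, lam ≤ z → z ≤ mu →
      (∀ᵐ y, y ∈ Set.uIoc z mu → (1 - y) * g y = (κ - 1) * (1 - mu) / (1 - y)) := by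
    intro z hz hzm
    filter_upwards [ae2 z hz hzm] with y hy hmem
    have hmem' := hmem
    rw [Set.uIoc_of_le hzm] at hmem'
    have h1y : (1:ℝ) - y ≠ 0 := ne_of_gt (by linarith [hmem'.2, hm1])
    rw [hy hmem]; field_simp
  -- integrability of the pieces
  have int1 : ∀ z : ℝ, 0 ≤ z → z ≤ lam → IntervalIntegrable g volume z lam :=
    fun z hz hzl => aux_intInt_congr (aux_ii_inv κ z lam hzl hl1) (ae1 z hz hzl)
  have int2 : ∀ z : ℝ, lam ≤ z → z ≤ mu → IntervalIntegrable g volume z mu :=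
    fun z hz hzm => aux_intInt_congr
      (aux_ii_invsq ((κ - 1) * (1 - mu)) z mu hzm hm1) (ae2 z hz hzm)
  have int3 : ∀ z : ℝ, mu ≤ z → z ≤ 1 → IntervalIntegrable g volume z 1 := by
    intro z hz hz1
    refine aux_intInt_congr (f := fun _ => (0:ℝ)) intervalIntegrable_const ?_
    filter_upwards with y hmem
    rcases Set.mem_uIoc.1 hmem with hm | hm
    · exact hg₃ y (le_trans hz hm.1.le) hm.2
    · exact absurd (hm.1.trans_le (hm.2.trans hz1)) (lt_irrefl 1)
  have int1' : ∀ z : ℝ, 0 ≤ z → z ≤ lam →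
      IntervalIntegrable (fun y => (1 - y) * g y) volume z lam :=
    fun z hz hzl => aux_intInt_congr (f := fun _ => κ) intervalIntegrable_const
      (ae1' z hz hzl)
  have int2' : ∀ z : ℝ, lam ≤ z → z ≤ mu →
      IntervalIntegrable (fun y => (1 - y) * g y) volume z mu :=
    fun z hz hzm => aux_intInt_congr (aux_ii_inv ((κ - 1) * (1 - mu)) z mu hzm hm1)
      (ae2' z hz hzm)
  have int3' : ∀ z : ℝ, mu ≤ z → z ≤ 1 →
      IntervalIntegrable (fun y => (1 - y) * g y) volume z 1 := by
    intro z hz hz1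
    refine aux_intInt_congr (f := fun _ => (0:ℝ)) intervalIntegrable_const ?_
    filter_upwards with y hmem
    rcases Set.mem_uIoc.1 hmem with hm | hm
    · rw [hg₃ y (le_trans hz hm.1.le) hm.2]; ring
    · exact absurd (hm.1.trans_le (hm.2.trans hz1)) (lt_irrefl 1)
  -- values of the piece integrals
  have Ig1 : ∀ z : ℝ, 0 ≤ z → z ≤ lam →
      ∫ y in z..lam, g y = κ * (Real.log (1 - z) - Real.log (1 - lam)) := by
    intro z hz hzl
    rw [intervalIntegral.integral_congr_ae (ae1 z hz hzl), aux_int_inv κ z lam hzl hl1]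
  have Ig2 : ∀ z : ℝ, lam ≤ z → z ≤ mu →
      ∫ y in z..mu, g y = (κ - 1) * (1 - mu) * (1 / (1 - mu) - 1 / (1 - z)) := by
    intro z hz hzm
    rw [intervalIntegral.integral_congr_ae (ae2 z hz hzm),
      aux_int_invsq ((κ - 1) * (1 - mu)) z mu hzm hm1]
  have Ig3 : ∀ z : ℝ, mu ≤ z → z ≤ 1 → ∫ y in z..1, g y = 0 := by
    intro z hz hz1
    rw [intervalIntegral.integral_congr_ae (g := fun _ => (0:ℝ)) ?_]
    · simp
    · filter_upwards with y hmem
      rcases Set.mem_uIoc.1 hmem with hm | hm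
      · exact hg₃ y (le_trans hz hm.1.le) hm.2
      · exact absurd (hm.1.trans_le (hm.2.trans hz1)) (lt_irrefl 1)
  have Ih1 : ∀ z : ℝ, 0 ≤ z → z ≤ lam →
      ∫ y in z..lam, (1 - y) * g y = κ * (lam - z) := by
    intro z hz hzl
    rw [intervalIntegral.integral_congr_ae (g := fun _ => κ) (ae1' z hz hzl),
      intervalIntegral.integral_const, smul_eq_mul]
    ring
  have Ih2 : ∀ z : ℝ, lam ≤ z → z ≤ mu →
      ∫ y in z..mu, (1 - y) * g y
        = (κ - 1) * (1 - mu) * (Real.log (1 - z) - Real.log (1 - mu)) := by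
    intro z hz hzm
    rw [intervalIntegral.integral_congr_ae (ae2' z hz hzm),
      aux_int_inv ((κ - 1) * (1 - mu)) z mu hzm hm1]
  have Ih3 : ∀ z : ℝ, mu ≤ z → z ≤ 1 → ∫ y in z..1, (1 - y) * g y = 0 := by
    intro z hz hz1
    rw [intervalIntegral.integral_congr_ae (g := fun _ => (0:ℝ)) ?_]
    · simp
    · filter_upwards with y hmem
      rcases Set.mem_uIoc.1 hmem with hm | hm
      · rw [hg₃ y (le_trans hz hm.1.le) hm.2]; ring
      · exact absurd (hm.1.trans_le (hm.2.trans hz1)) (lt_irrefl 1)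
  -- total integrals from z
  have G1 : ∀ z : ℝ, 0 ≤ z → z ≤ lam →
      ∫ y in z..1, g y = κ * (Real.log (1 - z) - Real.log (1 - lam))
        + (κ - 1) * (1 - mu) * (1 / (1 - mu) - 1 / (1 - lam)) := by
    intro z hz hzl
    rw [← intervalIntegral.integral_add_adjacent_intervals (int1 z hz hzl)
        ((int2 lam le_rfl hlm).trans (int3 mu le_rfl hm1.le)),
      ← intervalIntegral.integral_add_adjacent_intervals (int2 lam le_rfl hlm)
        (int3 mu le_rfl hm1.le),
      Ig1 z hz hzl, Ig2 lam le_rfl hlm, Ig3 mu le_rfl hm1.le]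
    ring
  have G2 : ∀ z : ℝ, lam ≤ z → z ≤ mu →
      ∫ y in z..1, g y = (κ - 1) * (1 - mu) * (1 / (1 - mu) - 1 / (1 - z)) := by
    intro z hz hzm
    rw [← intervalIntegral.integral_add_adjacent_intervals (int2 z hz hzm)
        (int3 mu le_rfl hm1.le), Ig2 z hz hzm, Ig3 mu le_rfl hm1.le]
    ring
  have H1 : ∀ z : ℝ, 0 ≤ z → z ≤ lam →
      ∫ y in z..1, (1 - y) * g y = κ * (lam - z)
        + (κ - 1) * (1 - mu) * (Real.log (1 - lam) - Real.log (1 - mu)) := by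
    intro z hz hzl
    rw [← intervalIntegral.integral_add_adjacent_intervals (int1' z hz hzl)
        ((int2' lam le_rfl hlm).trans (int3' mu le_rfl hm1.le)),
      ← intervalIntegral.integral_add_adjacent_intervals (int2' lam le_rfl hlm)
        (int3' mu le_rfl hm1.le),
      Ih1 z hz hzl, Ih2 lam le_rfl hlm, Ih3 mu le_rfl hm1.le]
    ring
  have H2 : ∀ z : ℝ, lam ≤ z → z ≤ mu →
      ∫ y in z..1, (1 - y) * g y
        = (κ - 1) * (1 - mu) * (Real.log (1 - z) - Real.log (1 - mu)) := by
    intro z hz hzm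
    rw [← intervalIntegral.integral_add_adjacent_intervals (int2' z hz hzm)
        (int3' mu le_rfl hm1.le), Ih2 z hz hzm, Ih3 mu le_rfl hm1.le]
    ring
  -- reformulation of hc2
  have hc2' : (κ - 1) * mu - κ * lam
      ≤ (κ - 1) * (1 - mu) * (Real.log (1 - lam) - Real.log (1 - mu)) := by
    rw [Real.log_div (ne_of_gt h1l) (ne_of_gt h1m)] at hc2
    linarith
  refine ⟨?_, ?_, ?_⟩
  · -- (i)
    rw [G1 0 le_rfl hl0]
    have e1 : (κ - 1) * (1 - mu) * (1 / (1 - mu) - 1 / (1 - lam))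
        = (κ - 1) * (mu - lam) / (1 - lam) := by field_simp; ring
    rw [e1]
    simp only [sub_zero, Real.log_one]
    linarith
  · -- (ii)
    intro z hz0 hz1
    rcases le_total z lam with h | h
    · rw [G1 z hz0 h]
      have h1z : (0:ℝ) < 1 - z := by linarith
      have key := aux_log lam z hl1 (by linarith)
      have step1 : κ * (lam - z)
          ≤ (1 - z) * (κ * (Real.log (1 - z) - Real.log (1 - lam))) := by
        have h2 := mul_le_mul_of_nonneg_left key hκ0.le
        have e : κ * (lam - z) = (1 - z) * (κ * ((lam - z) / (1 - z))) := by
          field_simp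
        rw [e]
        exact mul_le_mul_of_nonneg_left h2 h1z.le
      have step2 : (κ - 1) * (mu - lam)
          ≤ (1 - z) * ((κ - 1) * (1 - mu) * (1 / (1 - mu) - 1 / (1 - lam))) := by
        have e1 : (κ - 1) * (1 - mu) * (1 / (1 - mu) - 1 / (1 - lam))
            = (κ - 1) * (mu - lam) / (1 - lam) := by field_simp; ring
        rw [e1, mul_div_assoc', le_div_iff₀ h1l]
        nlinarith [mul_nonneg (mul_nonneg hκ1.le (by linarith : (0:ℝ) ≤ mu - lam))
          (by linarith : (0:ℝ) ≤ lam - z)]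
      rw [mul_add]
      have lin : (κ - 1) * mu - (κ - 1) * z ≤ κ * (lam - z) + (κ - 1) * (mu - lam) := by
        linarith
      linarith
    · rcases le_total z mu with h' | h'
      · rw [G2 z h h']
        have h1z : (0:ℝ) < 1 - z := by linarith
        have e : (1 - z) * ((κ - 1) * (1 - mu) * (1 / (1 - mu) - 1 / (1 - z)))
            = (κ - 1) * mu - (κ - 1) * z := by field_simp; ring
        rw [e]
      · rw [Ig3 z h' hz1, mul_zero]
        nlinarith [mul_nonneg hκ1.le (by linarith : (0:ℝ) ≤ z - mu)]
  · -- (iii)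
    intro z hz0 hz1
    rcases le_total z lam with h | h
    · rw [H1 z hz0 h]
      linarith
    · rcases le_total z mu with h' | h'
      · rw [H2 z h h']
        have h1z : (0:ℝ) < 1 - z := by linarith
        have key := aux_log lam z hl1 (by linarith)
        have step : (κ - 1) * (1 - mu) * ((lam - z) / (1 - z))
            ≤ (κ - 1) * (1 - mu) * (Real.log (1 - z) - Real.log (1 - lam)) :=
          mul_le_mul_of_nonneg_left key (by positivity)
        have stepA : -(κ * (z - lam)) ≤ (κ - 1) * (1 - mu) * ((lam - z) / (1 - z)) := by
          have e : (κ - 1) * (1 - mu) * ((lam - z) / (1 - z))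
              = ((κ - 1) * (1 - mu) * (lam - z)) / (1 - z) := by ring
          rw [e, le_div_iff₀ h1z]
          have inner : (0:ℝ) ≤ κ * (1 - z) - (κ - 1) * (1 - mu) := by
            nlinarith [mul_nonneg hκ0.le (by linarith : (0:ℝ) ≤ mu - z)]
          nlinarith [mul_nonneg (by linarith : (0:ℝ) ≤ z - lam) inner]
        linarith
      · rw [Ih3 z h' hz1]
        nlinarith [mul_nonneg hκ1.le (by linarith : (0:ℝ) ≤ z - mu)]
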